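/- (Explicit resolvent kernel of a two-dimensional geometric Brownian motion, Section 3.6.) Let a₁, a₂ > 0, μ₁, μ₂ ∈ ℝ, ρ ∈ (−1,1), r > 0, and set m_i := (μ_i − a_i²/2)/a_i for i = 1, 2. Let x₁, x₂, u, v > 0 and put û := (1/a₁) log(u/x₁), v̂ := (1/a₂) log(v/x₂), and assume (û, v̂) ≠ (0,0). Then ∫₀^∞ e^{−rt} · (a₁ a₂ u v)^{−1} · (2πt√(1−ρ²))^{−1} · exp( −B_ρ(û − m₁ t, v̂ − m₂ t)/(2t(1−ρ²)) ) dt = (π √(1−ρ²) · a₁ a₂ u v)^{−1} · exp( −A_ρ(û,v̂; m₁,m₂)/(2(1−ρ²)) ) · ∫₀^∞ cos(c w)/√(1+w²) dw, where r̂ := r + B_ρ(m₁,m₂)/(2(1−ρ²)) and c := √( 2 r̂ B_ρ(û,v̂)/(1−ρ²) ). -/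

import Mathlib

open MeasureTheory Real Filter
open scoped Topology

/-- `B_ρ(x,y) = x² − 2ρxy + y²`. -/
noncomputable def Brho (ρ x y : ℝ) : ℝ := x ^ 2 - 2 * ρ * x * y + y ^ 2

/-- `A_ρ(x,y;m₁,m₂) = 2ρ(m₂x + m₁y) − 2(m₁x + m₂y)`. -/
noncomputable def Arho (ρ x y m₁ m₂ : ℝ) : ℝ :=
  2 * ρ * (m₂ * x + m₁ * y) - 2 * (m₁ * x + m₂ * y)

open Set intervalIntegral

lemma integrable_cos_gauss (b c : ℝ) (hb : 0 < b) :
    Integrable (fun x : ℝ => Real.cos (c * x) * Real.exp (-b * x ^ 2)) := by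
  refine (integrable_exp_neg_mul_sq hb).mono' ?_ ?_
  · exact (Real.continuous_cos.comp (continuous_const.mul continuous_id)).mul
      (Real.continuous_exp.comp (continuous_const.mul (continuous_pow 2))) |>.aestronglyMeasurable
  · filter_upwards with x
    rw [norm_mul, Real.norm_eq_abs, Real.norm_eq_abs, abs_of_pos (Real.exp_pos _)]
    calc |Real.cos (c*x)| * Real.exp (-b*x^2) ≤ 1 * Real.exp (-b*x^2) := by
          gcongr; exact Real.abs_cos_le_one _
      _ = Real.exp (-b*x^2) := one_mul _

lemma cos_gauss_integral (b c : ℝ) (hb : 0 < b) :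
    ∫ x : ℝ, Real.cos (c * x) * Real.exp (-b * x ^ 2)
      = Real.sqrt (π / b) * Real.exp (-c ^ 2 / (4 * b)) := by
  have hbc : (0:ℝ) < (b : ℂ).re := by simpa using hb
  have h := fourierIntegral_gaussian (b := (b:ℂ)) hbc (c : ℂ)
  have hint : Integrable (fun x : ℝ => Complex.exp (Complex.I * c * x) * Complex.exp (-(b:ℂ) * x ^ 2)) := by
    have := integrable_cexp_quadratic hbc (Complex.I * c) 0
    refine this.congr ?_
    filter_upwards with x
    rw [← Complex.exp_add]
    ring_nf
  have hre : (∫ x : ℝ, Complex.exp (Complex.I * c * x) * Complex.exp (-(b:ℂ) * x ^ 2)).re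
      = ∫ x : ℝ, Real.cos (c * x) * Real.exp (-b * x ^ 2) := by
    have h0 := integral_re hint
    rw [RCLike.re_eq_complex_re] at h0
    rw [← h0]
    congr 1
    ext x
    have h1 : Complex.exp (Complex.I * c * x)
        = (Real.cos (c*x) : ℂ) + (Real.sin (c*x) : ℂ) * Complex.I := by
      rw [show Complex.I * (c:ℂ) * (x:ℂ) = ((c*x : ℝ) : ℂ) * Complex.I by push_cast; ring,
        Complex.exp_mul_I, ← Complex.ofReal_cos, ← Complex.ofReal_sin]
    have h2 : Complex.exp (-(b:ℂ) * x ^ 2) = (Real.exp (-b * x^2) : ℝ) := by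
      rw [show -(b:ℂ) * (x:ℂ)^2 = ((-b * x^2 : ℝ) : ℂ) by push_cast; ring, Complex.ofReal_exp]
    rw [h1, h2]
    have he : ((Real.cos (c*x) : ℂ) + (Real.sin (c*x) : ℂ) * Complex.I) * ((Real.exp (-b*x^2) : ℝ) : ℂ)
        = ((Real.cos (c*x) * Real.exp (-b*x^2) : ℝ) : ℂ)
          + ((Real.sin (c*x) * Real.exp (-b*x^2) : ℝ) : ℂ) * Complex.I := by
      push_cast; ring
    rw [he]
    simp only [Complex.add_re, Complex.ofReal_re, Complex.mul_I_re, Complex.ofReal_im,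
      neg_zero, add_zero]
  rw [← hre, h]
  have h3 : ((π / b : ℂ)) ^ (1/2 : ℂ) = ((Real.sqrt (π / b) : ℝ) : ℂ) := by
    rw [Real.sqrt_eq_rpow, Complex.ofReal_cpow (by positivity)]
    norm_num [Complex.ofReal_div]
  have h4 : Complex.exp (-(c:ℂ) ^ 2 / (4 * (b:ℂ))) = ((Real.exp (-c^2/(4*b)) : ℝ) : ℂ) := by
    rw [show -(c:ℂ)^2 / (4*(b:ℂ)) = ((-c^2/(4*b) : ℝ) : ℂ) by push_cast; ring, Complex.ofReal_exp]
  rw [h3, h4, ← Complex.ofReal_mul, Complex.ofReal_re]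

lemma cos_gauss_integral_Ioi (b c : ℝ) (hb : 0 < b) :
    ∫ x in Ioi (0:ℝ), Real.cos (c * x) * Real.exp (-b * x ^ 2)
      = Real.sqrt (π / b) / 2 * Real.exp (-c ^ 2 / (4 * b)) := by
  have heven : ∀ x : ℝ, Real.cos (c * |x|) * Real.exp (-b * |x| ^ 2)
      = Real.cos (c * x) * Real.exp (-b * x ^ 2) := by
    intro x
    rcases le_or_gt 0 x with h | h
    · rw [abs_of_nonneg h]
    · rw [abs_of_neg h, mul_neg, Real.cos_neg, neg_sq]
  have := integral_comp_abs (f := fun x => Real.cos (c * x) * Real.exp (-b * x ^ 2))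
  simp only [heven] at this
  rw [cos_gauss_integral b c hb] at this
  linarith

lemma cos_gauss_ibp_bound (c : ℝ) (hc : 0 < c) (a : ℝ) (ha : 0 ≤ a) (R : ℝ) (hR : 0 ≤ R) :
    |∫ w in (0:ℝ)..R, Real.cos (c * w) * Real.exp (-a * w ^ 2)| ≤ 2 / c := by
  have hu : ∀ w ∈ Set.uIcc (0:ℝ) R, HasDerivAt (fun w => Real.exp (-a * w ^ 2))
      (-(2*a*w) * Real.exp (-a * w ^ 2)) w := by
    intro w _
    have h1 : HasDerivAt (fun w : ℝ => -a * w ^ 2) (-(2*a*w)) w := by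
      have := (hasDerivAt_pow 2 w).const_mul (-a)
      simpa using this.congr_deriv (by ring)
    simpa [mul_comm] using h1.exp
  have hv : ∀ w ∈ Set.uIcc (0:ℝ) R, HasDerivAt (fun w => Real.sin (c * w) / c)
      (Real.cos (c * w)) w := by
    intro w _
    have h1 : HasDerivAt (fun w : ℝ => c * w) c w := by
      simpa using (hasDerivAt_id w).const_mul c
    have := (h1.sin).div_const c
    simpa [mul_comm, mul_div_assoc, mul_div_cancel_left₀ _ hc.ne'] using this
  have hcont1 : Continuous fun w : ℝ => -(2*a*w) * Real.exp (-a * w ^ 2) := by fun_prop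
  have hcont2 : Continuous fun w : ℝ => Real.cos (c * w) := by fun_prop
  have ibp := intervalIntegral.integral_mul_deriv_eq_deriv_mul hu hv
    (hcont1.intervalIntegrable 0 R) (hcont2.intervalIntegrable 0 R)
  simp only [Real.sin_zero, zero_div, mul_zero, sub_zero, mul_zero, zero_mul] at ibp
  -- ibp : ∫ exp(-aw²) * cos(cw) = exp(-aR²) * (sin(cR)/c) - exp(-a*0²)*(sin 0/c) - ∫ (-(2aw)e)(sin(cw)/c)
  have key : (∫ w in (0:ℝ)..R, Real.cos (c * w) * Real.exp (-a * w ^ 2))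
      = Real.exp (-a * R ^ 2) * (Real.sin (c * R) / c)
        - ∫ w in (0:ℝ)..R, -(2*a*w) * Real.exp (-a * w ^ 2) * (Real.sin (c * w) / c) := by
    rw [← ibp]
    congr 1
    ext w
    ring
  rw [key]
  have hb1 : |Real.exp (-a * R ^ 2) * (Real.sin (c * R) / c)| ≤ 1 / c := by
    rw [abs_mul, abs_div, abs_of_pos hc, abs_of_pos (Real.exp_pos _)]
    have h1 : Real.exp (-a * R ^ 2) ≤ 1 := Real.exp_le_one_iff.mpr (by nlinarith)
    have h2 : |Real.sin (c * R)| ≤ 1 := Real.abs_sin_le_one _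
    calc Real.exp (-a*R^2) * (|Real.sin (c*R)| / c) ≤ 1 * (1 / c) := by
          gcongr
      _ = 1/c := one_mul _
  have hb2 : |∫ w in (0:ℝ)..R, -(2*a*w) * Real.exp (-a * w ^ 2) * (Real.sin (c * w) / c)| ≤ 1 / c := by
    have hg : Continuous fun w : ℝ => -(2*a*w) * Real.exp (-a * w ^ 2) * (Real.sin (c * w) / c) := by
      fun_prop
    have hg2 : Continuous fun w : ℝ => 2*a*w * Real.exp (-a * w ^ 2) * (1 / c) := by fun_prop
    have hle : |∫ w in (0:ℝ)..R, -(2*a*w) * Real.exp (-a * w ^ 2) * (Real.sin (c * w) / c)|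
        ≤ ∫ w in (0:ℝ)..R, 2*a*w * Real.exp (-a * w ^ 2) * (1 / c) := by
      refine (intervalIntegral.abs_integral_le_integral_abs hR).trans ?_
      refine intervalIntegral.integral_mono_on hR (hg.abs.intervalIntegrable 0 R)
        (hg2.intervalIntegrable 0 R) ?_
      intro w hw
      have hw0 : 0 ≤ w := hw.1
      rw [abs_mul, abs_mul, abs_neg, abs_div, abs_of_pos hc]
      rw [abs_of_nonneg (by positivity : (0:ℝ) ≤ 2*a*w), abs_of_pos (Real.exp_pos _)]
      gcongr
      all_goals first | positivity | exact Real.abs_sin_le_one _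
    have hval : (∫ w in (0:ℝ)..R, 2*a*w * Real.exp (-a * w ^ 2) * (1 / c)) ≤ 1 / c := by
      have hder : ∀ w ∈ Set.uIcc (0:ℝ) R, HasDerivAt (fun w => -Real.exp (-a * w ^ 2))
          (2*a*w * Real.exp (-a * w ^ 2)) w := by
        intro w hw
        simpa [neg_mul, Pi.neg_def] using (hu w hw).neg
      have := intervalIntegral.integral_eq_sub_of_hasDerivAt hder
        ((by fun_prop : Continuous fun w : ℝ => 2*a*w * Real.exp (-a*w^2)).intervalIntegrable 0 R)
      rw [intervalIntegral.integral_mul_const, this]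
      have h1 : 0 < Real.exp (-a * R ^ 2) := Real.exp_pos _
      have h2 : Real.exp (-a * 0 ^ 2) = 1 := by norm_num
      rw [h2]
      have : -Real.exp (-a * R ^ 2) - -1 ≤ 1 := by linarith
      calc (-Real.exp (-a*R^2) - -1) * (1/c) ≤ 1 * (1/c) := by
            apply mul_le_mul_of_nonneg_right this (by positivity)
        _ = 1/c := one_mul _
    exact hle.trans hval
  calc |_| ≤ |Real.exp (-a * R ^ 2) * (Real.sin (c * R) / c)|
        + |∫ w in (0:ℝ)..R, -(2*a*w) * Real.exp (-a * w ^ 2) * (Real.sin (c * w) / c)| :=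
        abs_sub _ _
    _ ≤ 1/c + 1/c := add_le_add hb1 hb2
    _ = 2/c := by ring

lemma sqrt_two_div_pi_mul (b : ℝ) (hb : 0 < b) :
    Real.sqrt (2/π) * (Real.sqrt (π / (b/2)) / 2) = 1 / Real.sqrt b := by
  have h4 : Real.sqrt (2/π) * Real.sqrt (π/(b/2)) = 2 / Real.sqrt b := by
    rw [← Real.sqrt_mul (by positivity)]
    have he : 2/π * (π/(b/2)) = 4/b := by
      field_simp
      ring
    rw [he, Real.sqrt_div (by norm_num : (0:ℝ) ≤ 4) b,
      show Real.sqrt 4 = 2 by rw [show (4:ℝ) = 2^2 by norm_num, Real.sqrt_sq (by norm_num)]]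
  rw [← mul_div_assoc, h4]
  ring

lemma tendsto_cos_sqrt_integral (c : ℝ) (hc : 0 < c) :
    Tendsto (fun R => ∫ w in (0:ℝ)..R, Real.cos (c * w) / Real.sqrt (1 + w ^ 2)) atTop
      (𝓝 ((1/2) * ∫ t in Ioi (0:ℝ), Real.exp (-t - (c^2/4)/t) / t)) := by
  set κ : ℝ := Real.sqrt (2/π) with hκ
  have hκpos : 0 < κ := Real.sqrt_pos.mpr (by positivity)
  -- the parametric inner integral
  set F : ℝ → ℝ → ℝ := fun R s => κ * Real.exp (-(1/2) * s^2) *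
      ∫ w in (0:ℝ)..R, Real.cos (c * w) * Real.exp (-(s^2/2) * w^2) with hF
  -- limit function
  set L : ℝ → ℝ := fun s => κ * Real.exp (-(1/2) * s^2) *
      (Real.sqrt (π / (s^2/2)) / 2 * Real.exp (-c^2/(4 * (s^2/2)))) with hL
  -- Step 1: DCT
  have hDCT : Tendsto (fun R => ∫ s in Ioi (0:ℝ), F R s) atTop
      (𝓝 (∫ s in Ioi (0:ℝ), L s)) := by
    refine tendsto_integral_filter_of_dominated_convergence
      (fun s => κ * Real.exp (-(1/2) * s^2) * (2/c)) ?_ ?_ ?_ ?_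
    · filter_upwards with R
      have hcont : Continuous (F R) := by
        apply Continuous.mul
        · fun_prop
        · exact intervalIntegral.continuous_parametric_intervalIntegral_of_continuous'
            (f := fun s w => Real.cos (c * w) * Real.exp (-(s^2/2) * w^2))
            (by fun_prop) 0 R
      exact hcont.aestronglyMeasurable
    · filter_upwards [eventually_ge_atTop (0:ℝ)] with R hR
      filter_upwards with s
      have hb := cos_gauss_ibp_bound c hc (s^2/2) (by positivity) R hR
      rw [hF]
      rw [Real.norm_eq_abs, abs_mul, abs_mul, abs_of_pos hκpos, abs_of_pos (Real.exp_pos _)]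
      exact mul_le_mul_of_nonneg_left hb (by positivity)
    · exact (((integrable_exp_neg_mul_sq (by norm_num : (0:ℝ) < 1/2)).integrableOn).const_mul
        κ).mul_const (2/c)
    · filter_upwards [ae_restrict_mem measurableSet_Ioi] with s hs
      have hs0 : (0:ℝ) < s := hs
      have hs2 : 0 < s^2/2 := by positivity
      have hint : IntegrableOn (fun w => Real.cos (c * w) * Real.exp (-(s^2/2) * w^2))
          (Ioi (0:ℝ)) := (integrable_cos_gauss (s^2/2) c hs2).integrableOn
      have ht := intervalIntegral_tendsto_integral_Ioi 0 hint tendsto_id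
      rw [cos_gauss_integral_Ioi (s^2/2) c hs2] at ht
      have ht2 := ht.const_mul (κ * Real.exp (-(1/2) * s^2))
      simp only [id] at ht2
      exact ht2
  -- Step 2: representation for R ≥ 0
  have hrep : ∀ R : ℝ, 0 ≤ R → (∫ w in (0:ℝ)..R, Real.cos (c*w) / Real.sqrt (1+w^2))
      = ∫ s in Ioi (0:ℝ), F R s := by
    intro R hR
    have hfint : Integrable
        (Function.uncurry fun w s => κ * (Real.cos (c*w) * Real.exp (-((1+w^2)/2) * s^2)))
        ((volume.restrict (Ioc 0 R)).prod (volume.restrict (Ioi 0))) := by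
      refine Integrable.mono' (g := fun p : ℝ × ℝ => κ * Real.exp (-(1/2) * p.2^2)) ?_ ?_ ?_
      · have h1 : Integrable (fun _ : ℝ => κ) (volume.restrict (Ioc (0:ℝ) R)) :=
          integrable_const _
        have h2 : Integrable (fun s : ℝ => Real.exp (-(1/2) * s^2))
            (volume.restrict (Ioi (0:ℝ))) :=
          (integrable_exp_neg_mul_sq (by norm_num : (0:ℝ) < 1/2)).integrableOn
        exact h1.mul_prod h2
      · exact (by fun_prop :
          Continuous fun p : ℝ × ℝ => κ * (Real.cos (c*p.1) * Real.exp (-((1+p.1^2)/2) * p.2^2))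
          ).aestronglyMeasurable
      · filter_upwards with p
        simp only [Function.uncurry]
        rw [Real.norm_eq_abs, abs_mul, abs_of_pos hκpos, abs_mul,
          abs_of_pos (Real.exp_pos _)]
        have h3 : Real.exp (-((1+p.1^2)/2) * p.2^2) ≤ Real.exp (-(1/2) * p.2^2) :=
          Real.exp_le_exp.mpr (by nlinarith [sq_nonneg p.1, sq_nonneg p.2])
        calc κ * (|Real.cos (c*p.1)| * Real.exp (-((1+p.1^2)/2) * p.2^2))
            ≤ κ * (1 * Real.exp (-(1/2) * p.2^2)) := by
              apply mul_le_mul_of_nonneg_left _ hκpos.le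
              exact mul_le_mul (Real.abs_cos_le_one _) h3 (Real.exp_pos _).le zero_le_one
          _ = κ * Real.exp (-(1/2) * p.2^2) := by ring
    have hswap := integral_integral_swap hfint
    rw [intervalIntegral.integral_of_le hR]
    calc (∫ w in Ioc (0:ℝ) R, Real.cos (c*w) / Real.sqrt (1+w^2))
        = ∫ w in Ioc (0:ℝ) R, ∫ s in Ioi (0:ℝ),
            κ * (Real.cos (c*w) * Real.exp (-((1+w^2)/2) * s^2)) := by
          refine setIntegral_congr_fun measurableSet_Ioc (fun w _ => ?_)
          rw [MeasureTheory.integral_const_mul, MeasureTheory.integral_const_mul,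
            integral_gaussian_Ioi ((1+w^2)/2)]
          have h4 := sqrt_two_div_pi_mul (1+w^2) (by positivity)
          calc Real.cos (c*w) / Real.sqrt (1+w^2)
              = Real.cos (c*w) * (κ * (Real.sqrt (π/((1+w^2)/2))/2)) := by
                rw [h4, mul_one_div]
            _ = κ * (Real.cos (c*w) * (Real.sqrt (π/((1+w^2)/2))/2)) := by ring
      _ = ∫ s in Ioi (0:ℝ), ∫ w in Ioc (0:ℝ) R,
            κ * (Real.cos (c*w) * Real.exp (-((1+w^2)/2) * s^2)) := hswap
      _ = ∫ s in Ioi (0:ℝ), F R s := by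
          refine setIntegral_congr_fun measurableSet_Ioi (fun s _ => ?_)
          have h5 : ∀ w : ℝ, κ * (Real.cos (c*w) * Real.exp (-((1+w^2)/2) * s^2))
              = (κ * Real.exp (-(1/2) * s^2)) * (Real.cos (c*w) * Real.exp (-(s^2/2) * w^2)) := by
            intro w
            rw [show -((1+w^2)/2) * s^2 = (-(1/2) * s^2) + (-(s^2/2) * w^2) by ring,
              Real.exp_add]
            ring
          simp_rw [h5]
          rw [MeasureTheory.integral_const_mul]
          simp only [hF]
          rw [intervalIntegral.integral_of_le hR]
  -- Step 3: value of the limit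
  have hLval : (∫ s in Ioi (0:ℝ), L s)
      = (1/2) * ∫ t in Ioi (0:ℝ), Real.exp (-t - (c^2/4)/t) / t := by
    have hM : (∫ s in Ioi (0:ℝ), L s)
        = ∫ s in Ioi (0:ℝ), Real.exp (-(s^2/2) - c^2/(2*s^2)) / s := by
      refine setIntegral_congr_fun measurableSet_Ioi (fun s hs => ?_)
      have hs0 : (0:ℝ) < s := hs
      have h4 := sqrt_two_div_pi_mul (s^2) (by positivity)
      rw [Real.sqrt_sq hs0.le] at h4
      rw [hL]
      have he : Real.exp (-(1/2) * s^2) * Real.exp (-c^2/(4*(s^2/2)))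
          = Real.exp (-(s^2/2) - c^2/(2*s^2)) := by
        rw [← Real.exp_add]
        congr 1
        field_simp
        ring
      calc κ * Real.exp (-(1/2) * s^2)
            * (Real.sqrt (π/(s^2/2))/2 * Real.exp (-c^2/(4*(s^2/2))))
          = (κ * (Real.sqrt (π/(s^2/2))/2))
            * (Real.exp (-(1/2) * s^2) * Real.exp (-c^2/(4*(s^2/2)))) := by ring
        _ = (1/s) * Real.exp (-(s^2/2) - c^2/(2*s^2)) := by rw [h4, he]
        _ = Real.exp (-(s^2/2) - c^2/(2*s^2)) / s := by ring
    set g : ℝ → ℝ := fun y => Real.exp (-(y/2) - c^2/(2*y)) / (2*y) with hg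
    have hsub1 : (∫ s in Ioi (0:ℝ), Real.exp (-(s^2/2) - c^2/(2*s^2)) / s)
        = ∫ y in Ioi (0:ℝ), g y := by
      rw [← integral_comp_rpow_Ioi_of_pos (g := g) (two_pos)]
      refine setIntegral_congr_fun measurableSet_Ioi (fun x hx => ?_)
      have hx0 : (0:ℝ) < x := hx
      rw [hg]
      simp only [smul_eq_mul]
      rw [show (2:ℝ) - 1 = 1 by norm_num, Real.rpow_one, Real.rpow_two]
      rw [show -(x^2/2) - c^2/(2*x^2) = -(x^2/2) - c^2/(2*x^2) from rfl]
      field_simp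
    have hsub2 : (∫ y in Ioi (0:ℝ), g y)
        = (1/2) * ∫ t in Ioi (0:ℝ), Real.exp (-t - (c^2/4)/t) / t := by
      have h6 := integral_comp_mul_left_Ioi g 0 (two_pos)
      rw [mul_zero] at h6
      have h7 : (∫ x in Ioi (0:ℝ), g (2*x))
          = ∫ x in Ioi (0:ℝ), (1/4) * (Real.exp (-x - (c^2/4)/x) / x) := by
        refine setIntegral_congr_fun measurableSet_Ioi (fun x hx => ?_)
        have hx0 : (0:ℝ) < x := hx
        rw [hg]
        have : -(2*x/2) - c^2/(2*(2*x)) = -x - (c^2/4)/x := by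
          field_simp
          ring
        simp only []
        rw [this]
        field_simp
        ring
      rw [h7, MeasureTheory.integral_const_mul] at h6
      rw [smul_eq_mul] at h6
      linarith [h6]
    rw [hM, hsub1, hsub2]
  rw [← hLval]
  refine hDCT.congr' ?_
  filter_upwards [eventually_ge_atTop (0:ℝ)] with R hR
  exact (hrep R hR).symm

/-- Explicit resolvent kernel of a two-dimensional geometric Brownian motion
(Section 3.6):
`∫₀^∞ e^{-rt} (a₁a₂uv)⁻¹ (2πt√(1-ρ²))⁻¹ exp(−B_ρ(û−m₁t, v̂−m₂t)/(2t(1-ρ²))) dt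
  = (π√(1-ρ²) a₁a₂uv)⁻¹ exp(−A_ρ(û,v̂;m₁,m₂)/(2(1-ρ²))) K₀(√(2r̂ B_ρ(û,v̂)/(1-ρ²)))`,
where `r̂ = r + B_ρ(m₁,m₂)/(2(1-ρ²))` and `K₀(c) = ∫₀^∞ cos(cw)/√(1+w²) dw` is
understood as an improper integral. -/
theorem resolvent_kernel_2d_gbm (a₁ a₂ μ₁ μ₂ ρ r x₁ x₂ u v : ℝ)
    (ha₁ : 0 < a₁) (ha₂ : 0 < a₂) (hρ : ρ ∈ Set.Ioo (-1 : ℝ) 1) (hr : 0 < r)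
    (hx₁ : 0 < x₁) (hx₂ : 0 < x₂) (hu : 0 < u) (hv : 0 < v)
    (m₁ m₂ uh vh : ℝ)
    (hm₁ : m₁ = (μ₁ - a₁ ^ 2 / 2) / a₁) (hm₂ : m₂ = (μ₂ - a₂ ^ 2 / 2) / a₂)
    (huh : uh = (1 / a₁) * Real.log (u / x₁)) (hvh : vh = (1 / a₂) * Real.log (v / x₂))
    (hne : (uh, vh) ≠ (0, 0)) :
    ∃ K : ℝ,
      Tendsto (fun R => ∫ w in (0 : ℝ)..R,
          Real.cos (Real.sqrt
              (2 * (r + Brho ρ m₁ m₂ / (2 * (1 - ρ ^ 2))) * Brho ρ uh vh /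
                (1 - ρ ^ 2)) * w) /
            Real.sqrt (1 + w ^ 2)) atTop (𝓝 K) ∧
      (∫ t in Set.Ioi (0 : ℝ),
          Real.exp (-r * t) * (a₁ * a₂ * u * v)⁻¹ *
            (2 * Real.pi * t * Real.sqrt (1 - ρ ^ 2))⁻¹ *
            Real.exp (-Brho ρ (uh - m₁ * t) (vh - m₂ * t) / (2 * t * (1 - ρ ^ 2))))
        = (Real.pi * Real.sqrt (1 - ρ ^ 2) * (a₁ * a₂ * u * v))⁻¹ *
            Real.exp (-Arho ρ uh vh m₁ m₂ / (2 * (1 - ρ ^ 2))) * K := by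
  obtain ⟨hρ1, hρ2⟩ := hρ
  set D : ℝ := 1 - ρ ^ 2 with hD
  have hD0 : 0 < D := by nlinarith
  have hsD : 0 < Real.sqrt D := Real.sqrt_pos.mpr hD0
  set B : ℝ := Brho ρ uh vh with hBdef
  set Bm : ℝ := Brho ρ m₁ m₂ with hBmdef
  set A : ℝ := Arho ρ uh vh m₁ m₂ with hAdef
  have hB0 : 0 < B := by
    have hne' : uh ≠ 0 ∨ vh ≠ 0 := by
      by_contra h
      push_neg at h
      exact hne (by rw [h.1, h.2])
    rw [hBdef]
    unfold Brho
    rcases hne' with h | h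
    · nlinarith [sq_nonneg (uh - ρ * vh), sq_nonneg (vh - ρ * uh), sq_nonneg uh, sq_nonneg vh,
        sq_pos_of_ne_zero h]
    · nlinarith [sq_nonneg (uh - ρ * vh), sq_nonneg (vh - ρ * uh), sq_nonneg uh, sq_nonneg vh,
        sq_pos_of_ne_zero h]
  have hBm0 : 0 ≤ Bm := by
    rw [hBmdef]; unfold Brho
    nlinarith [sq_nonneg (m₁ - ρ * m₂), sq_nonneg m₂]
  set rh : ℝ := r + Bm / (2 * D) with hrh
  have hrh0 : 0 < rh := by
    rw [hrh]
    have : 0 ≤ Bm / (2 * D) := by positivity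
    linarith
  set β : ℝ := B / (2 * D) with hβ
  have hβ0 : 0 < β := by positivity
  set c : ℝ := Real.sqrt (2 * rh * B / D) with hc
  have hcarg : 0 < 2 * rh * B / D := by positivity
  have hc0 : 0 < c := Real.sqrt_pos.mpr hcarg
  have hcsq : c ^ 2 = 2 * rh * B / D := Real.sq_sqrt hcarg.le
  have hc4 : c ^ 2 / 4 = rh * β := by
    rw [hcsq, hβ]; field_simp; ring
  set T : ℝ := ∫ t in Ioi (0:ℝ), Real.exp (-t - (c^2/4)/t) / t with hT
  refine ⟨(1/2) * T, ?_, ?_⟩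
  · exact tendsto_cos_sqrt_integral c hc0
  · -- the integral identity
    set J : ℝ := ∫ t in Ioi (0:ℝ), Real.exp (-(rh*t) - β/t) / t with hJ
    have hJT : J = T := by
      have h6 := integral_comp_mul_left_Ioi (fun t => Real.exp (-t - (c^2/4)/t) / t) 0 hrh0
      rw [mul_zero] at h6
      have h7 : (∫ x in Ioi (0:ℝ), Real.exp (-(rh*x) - (c^2/4)/(rh*x)) / (rh*x))
          = rh⁻¹ * T := by rw [h6, smul_eq_mul, hT]
      have h8 : (∫ x in Ioi (0:ℝ), Real.exp (-(rh*x) - (c^2/4)/(rh*x)) / (rh*x))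
          = rh⁻¹ * J := by
        rw [hJ, ← MeasureTheory.integral_const_mul]
        refine setIntegral_congr_fun measurableSet_Ioi (fun x hx => ?_)
        have hx0 : (0:ℝ) < x := hx
        rw [hc4]
        rw [show rh * β / (rh * x) = β / x by field_simp]
        field_simp
      have : rh⁻¹ * J = rh⁻¹ * T := by rw [← h8, h7]
      exact mul_left_cancel₀ (by positivity) this
    set C : ℝ := (a₁*a₂*u*v)⁻¹ * (2*π*Real.sqrt D)⁻¹ * Real.exp (-A/(2*D)) with hC
    have hLHS : (∫ t in Set.Ioi (0 : ℝ),
          Real.exp (-r * t) * (a₁ * a₂ * u * v)⁻¹ *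
            (2 * Real.pi * t * Real.sqrt (1 - ρ ^ 2))⁻¹ *
            Real.exp (-Brho ρ (uh - m₁ * t) (vh - m₂ * t) / (2 * t * (1 - ρ ^ 2))))
        = C * J := by
      rw [hJ, ← MeasureTheory.integral_const_mul]
      refine setIntegral_congr_fun measurableSet_Ioi (fun t ht => ?_)
      have ht0 : (0:ℝ) < t := ht
      have hBexp : Brho ρ (uh - m₁ * t) (vh - m₂ * t) = B + t * A + t^2 * Bm := by
        rw [hBdef, hAdef, hBmdef]
        unfold Brho Arho
        ring
      have hexp : -Brho ρ (uh - m₁ * t) (vh - m₂ * t) / (2 * t * D)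
          = -A/(2*D) + (-r*t - (-r*t) + (-(rh*t) - β/t) + r*t) := by
        rw [hBexp, hrh, hβ]
        field_simp
        ring
      have hexp2 : Real.exp (-r * t) * Real.exp (-Brho ρ (uh - m₁ * t) (vh - m₂ * t) / (2 * t * D))
          = Real.exp (-A/(2*D)) * Real.exp (-(rh*t) - β/t) := by
        rw [← Real.exp_add, ← Real.exp_add, hexp]
        congr 1
        ring
      rw [← hD]
      calc Real.exp (-r * t) * (a₁ * a₂ * u * v)⁻¹ * (2 * π * t * Real.sqrt D)⁻¹ *
            Real.exp (-Brho ρ (uh - m₁ * t) (vh - m₂ * t) / (2 * t * D))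
          = (a₁ * a₂ * u * v)⁻¹ * ((2 * π * Real.sqrt D)⁻¹ * t⁻¹) *
            (Real.exp (-r * t) * Real.exp (-Brho ρ (uh - m₁ * t) (vh - m₂ * t) / (2 * t * D))) := by
            rw [show 2 * π * t * Real.sqrt D = (2 * π * Real.sqrt D) * t by ring, mul_inv]
            ring
        _ = (a₁ * a₂ * u * v)⁻¹ * ((2 * π * Real.sqrt D)⁻¹ * t⁻¹) *
            (Real.exp (-A/(2*D)) * Real.exp (-(rh*t) - β/t)) := by rw [hexp2]
        _ = C * (Real.exp (-(rh*t) - β/t) / t) := by rw [hC]; field_simp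
    rw [hLHS, hJT]
    have hCeq : C = (π * Real.sqrt D * (a₁*a₂*u*v))⁻¹ * Real.exp (-A/(2*D)) * (1/2) := by
      rw [hC]
      rw [show (π * Real.sqrt D * (a₁*a₂*u*v))⁻¹ = (a₁*a₂*u*v)⁻¹ * (π*Real.sqrt D)⁻¹ by
        rw [mul_inv]; ring]
      rw [show (2*π*Real.sqrt D)⁻¹ = (π*Real.sqrt D)⁻¹ * 2⁻¹ by
        rw [show 2*π*Real.sqrt D = (π*Real.sqrt D)*2 by ring, mul_inv]]
      ring
    rw [hCeq]
    ring
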